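/- Suppose the continuous linear operator L satisfies the linear forward-Euler condition: there exists h̃ > 0 such that f(u + τ • L u) ≤ f(u) for all u ∈ E and all τ with 0 ≤ τ ≤ h̃. Then f(exp(τ • L) u) ≤ f(u) for every τ ≥ 0 and every u ∈ E. -/

import Mathlib

open NormedSpace Finset

set_option synthInstance.maxHeartbeats 1000000 in
set_option maxHeartbeats 1000000 in

/-- **SSP exponential monotonicity from the linear forward-Euler condition.**
If the continuous linear operator `L` satisfies the linear forward-Euler condition
`f (u + τ • L u) ≤ f u` for all `0 ≤ τ ≤ htilde` (for some `htilde > 0`), then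
`f (exp (τ • L) u) ≤ f u` for every `τ ≥ 0` and every `u`. -/
theorem ssp_exp_monotone_of_forwardEuler
    {E : Type*} [NormedAddCommGroup E] [NormedSpace ℝ E] [FiniteDimensional ℝ E]
    (f : E → ℝ) (hf_cont : Continuous f) (hf_conv : ConvexOn ℝ Set.univ f)
    (L : E →L[ℝ] E)
    (htilde : ℝ) (htilde_pos : 0 < htilde)
    (hFE : ∀ u : E, ∀ τ : ℝ, 0 ≤ τ → τ ≤ htilde → f (u + τ • L u) ≤ f u) :
    ∀ τ : ℝ, 0 ≤ τ → ∀ u : E, f (NormedSpace.exp (τ • L) u) ≤ f u := by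
  intro τ hτ u
  set B : E →L[ℝ] E := 1 + htilde • L with hB
  -- Step 1: iterates of B decrease f
  have hBpow : ∀ k : ℕ, f ((B ^ k) u) ≤ f u := by
    intro k
    induction k with
    | zero => simp
    | succ k ih =>
      have : (B ^ (k + 1)) u = (B ^ k) u + htilde • L ((B ^ k) u) := by
        rw [pow_succ']
        simp [hB, ContinuousLinearMap.add_apply, ContinuousLinearMap.mul_apply]
      rw [this]
      exact le_trans (hFE _ htilde htilde_pos.le le_rfl) ih
  set lam : ℝ := τ / htilde with hlam
  have hlam0 : 0 ≤ lam := div_nonneg hτ htilde_pos.le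
  -- weights
  set c : ℕ → ℝ := fun k => Real.exp (-lam) * (lam ^ k / k.factorial) with hc
  have hc0 : ∀ k, 0 ≤ c k := fun k =>
    mul_nonneg (Real.exp_pos _).le (div_nonneg (pow_nonneg hlam0 _) (by positivity))
  -- Step 2: exp (τ • L) = e^{-lam} • exp (lam • B)
  have hτL : τ • L = (-lam) • (1 : E →L[ℝ] E) + lam • B := by
    rw [hB, smul_add, smul_smul, ← add_assoc]
    have : lam * htilde = τ := div_mul_cancel₀ τ htilde_pos.ne'
    rw [this]
    simp
  have hcomm : Commute ((-lam) • (1 : E →L[ℝ] E)) (lam • B) := by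
    apply Commute.smul_left
    apply Commute.smul_right
    exact Commute.one_left _
  have hexp1 : NormedSpace.exp ((-lam) • (1 : E →L[ℝ] E)) =
      Real.exp (-lam) • (1 : E →L[ℝ] E) := by
    have h1 : ((-lam) • (1 : E →L[ℝ] E)) = algebraMap ℝ (E →L[ℝ] E) (-lam) := by
      simp [Algebra.algebraMap_eq_smul_one]
    rw [h1, ← NormedSpace.algebraMap_exp_comm, Algebra.algebraMap_eq_smul_one,
      ← Real.exp_eq_exp_ℝ]
  have hexpsplit : NormedSpace.exp (τ • L) =
      Real.exp (-lam) • NormedSpace.exp (lam • B) := by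
    let +nondep : NormedAlgebra ℚ (E →L[ℝ] E) := .restrictScalars ℚ ℝ (E →L[ℝ] E)
    rw [hτL, NormedSpace.exp_add_of_commute hcomm, hexp1, smul_mul_assoc, one_mul]
  -- Step 3: HasSum of the Poisson combination
  have hsum0 : HasSum (fun k : ℕ => ((k.factorial : ℝ)⁻¹) • (lam • B) ^ k)
      (NormedSpace.exp (lam • B)) := NormedSpace.exp_series_hasSum_exp' _
  have hsum1 : HasSum (fun k : ℕ => (lam ^ k / k.factorial) • ((B ^ k) u))
      (NormedSpace.exp (lam • B) u) := by
    have := hsum0.mapL (ContinuousLinearMap.apply ℝ E u)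
    simpa [smul_pow, smul_smul, div_eq_inv_mul] using this
  have hsum2 : HasSum (fun k : ℕ => c k • ((B ^ k) u)) (NormedSpace.exp (τ • L) u) := by
    have := hsum1.const_smul (Real.exp (-lam))
    rw [hexpsplit]
    simpa [hc, smul_smul, mul_assoc] using this
  have hsumc : HasSum c 1 := by
    have h1 : HasSum (fun k : ℕ => lam ^ k / k.factorial) (Real.exp lam) := by
      rw [Real.exp_eq_exp_ℝ]
      exact NormedSpace.expSeries_div_hasSum_exp lam
    have := h1.mul_left (Real.exp (-lam))
    simpa [← Real.exp_add] using this
  -- partial sums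
  set W : ℕ → ℝ := fun N => ∑ k ∈ range N, c k with hW
  set v : ℕ → E := fun N => ∑ k ∈ range N, c k • ((B ^ k) u) with hv
  have hWt : Filter.Tendsto W Filter.atTop (nhds 1) := hsumc.tendsto_sum_nat
  have hvt : Filter.Tendsto v Filter.atTop (nhds (NormedSpace.exp (τ • L) u)) :=
    hsum2.tendsto_sum_nat
  have hWpos : ∀ N, 1 ≤ N → 0 < W N := by
    intro N hN
    have h0 : 0 < c 0 := by
      simp only [hc, pow_zero, Nat.factorial_zero]
      positivity
    calc 0 < c 0 := h0
      _ ≤ W N := Finset.single_le_sum (fun k _ => hc0 k)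
          (Finset.mem_range.mpr (by omega))
  -- Jensen on partial sums
  have hkey : ∀ N, 1 ≤ N → f ((W N)⁻¹ • v N) ≤ f u := by
    intro N hN
    have hWN := hWpos N hN
    have hsmul : (W N)⁻¹ • v N = ∑ k ∈ range N, ((W N)⁻¹ * c k) • ((B ^ k) u) := by
      rw [hv, Finset.smul_sum]
      simp [smul_smul]
    have hwsum : ∑ k ∈ range N, (W N)⁻¹ * c k = 1 := by
      rw [← Finset.mul_sum]
      exact inv_mul_cancel₀ hWN.ne'
    have hjensen := hf_conv.map_sum_le (t := range N)
      (w := fun k => (W N)⁻¹ * c k) (p := fun k => (B ^ k) u)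
      (fun k _ => mul_nonneg (inv_nonneg.mpr hWN.le) (hc0 k)) hwsum
      (fun k _ => Set.mem_univ _)
    rw [hsmul]
    refine le_trans hjensen ?_
    calc ∑ k ∈ range N, ((W N)⁻¹ * c k) * f ((B ^ k) u)
        ≤ ∑ k ∈ range N, ((W N)⁻¹ * c k) * f u :=
          Finset.sum_le_sum fun k _ => mul_le_mul_of_nonneg_left (hBpow k)
            (mul_nonneg (inv_nonneg.mpr hWN.le) (hc0 k))
      _ = (∑ k ∈ range N, (W N)⁻¹ * c k) * f u := by rw [Finset.sum_mul]
      _ = f u := by rw [hwsum, one_mul]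
  -- pass to the limit
  have hlimit : Filter.Tendsto (fun N => f ((W N)⁻¹ • v N)) Filter.atTop
      (nhds (f (NormedSpace.exp (τ • L) u))) := by
    have h1 : Filter.Tendsto (fun N => (W N)⁻¹ • v N) Filter.atTop
        (nhds ((1 : ℝ)⁻¹ • NormedSpace.exp (τ • L) u)) :=
      Filter.Tendsto.smul (hWt.inv₀ one_ne_zero) hvt
    rw [inv_one, one_smul] at h1
    exact hf_cont.continuousAt.tendsto.comp h1
  exact le_of_tendsto hlimit (Filter.eventually_atTop.mpr ⟨1, hkey⟩)
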